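/- Let H = ([t], (e_1,…,e_n)) be a hypergraph with an orientation (each hyperedge assigned a head vertex) and a root vertex v ∈ [t] such that every other vertex u has k edge-disjoint directed paths to v. Define δ_j = indeg(j) for j ≠ v and δ_v = indeg(v) − k, and assume δ_v ≥ 0 and ∑_j δ_j = n − k. Set S_j = {i ∈ [n] : j ∉ e_i}. Then the multiset consisting of δ_j copies of S_j for each j ∈ [t] is an (n, n−k)-generic-zero-pattern; that is, for every nonempty multiset K over [t] in which each j appears at most δ_j times, |⋂_{j∈K} S_j| ≤ n − k − |K| (counting K with multiplicity). -/

import Mathlib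

open Finset

/-- A directed path in a directed hypergraph (edges `e`, head assignment `head`),
given as the list of its edges: `IsPath e head u v es` means the path starts at `u`,
ends at `v`, and at each step the current vertex is a tail (member but not head)
of the next edge, moving to that edge's head. -/
def IsPath {t n : ℕ} (e : Fin n → Finset (Fin t)) (head : Fin n → Fin t) :
    Fin t → Fin t → List (Fin n) → Prop
  | u, v, [] => u = v
  | u, v, i :: rest => u ∈ e i ∧ u ≠ head i ∧ IsPath e head (head i) v rest

/-- Given an orientation of `H = ([t],(e₁,…,eₙ))` with root `v` such
that every other vertex has `k` edge-disjoint directed paths to `v`, and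
`δⱼ = indeg(j)` for `j ≠ v`, `δᵥ = indeg(v) − k ≥ 0`, `∑ δⱼ = n − k`, the multiset
of `δⱼ` copies of `Sⱼ = {i : j ∉ eᵢ}` is an `(n, n−k)`-generic-zero-pattern: for any
nonempty multiset `K` (given by multiplicities `m j ≤ δ j`),
`|⋂_{j ∈ supp K} Sⱼ| ≤ n − k − |K|`. -/
lemma exists_crossing {t n : ℕ} (e : Fin n → Finset (Fin t)) (head : Fin n → Fin t)
    (P : Fin t → Prop) :
    ∀ (es : List (Fin n)) (u v : Fin t), IsPath e head u v es → P u → ¬ P v →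
      ∃ i ∈ es, (∃ w ∈ e i, P w) ∧ ¬ P (head i) := by
  intro es
  induction es with
  | nil =>
    intro u v h hu hv
    exact absurd ((h : u = v) ▸ hu) hv
  | cons i rest ih =>
    intro u v h hu hv
    obtain ⟨hue, _, hrest⟩ := h
    by_cases hp : P (head i)
    · obtain ⟨i', hi', hw⟩ := ih (head i) v hrest hp hv
      exact ⟨i', List.mem_cons_of_mem _ hi', hw⟩
    · exact ⟨i, List.mem_cons_self, ⟨u, hue, hu⟩, hp⟩


theorem stmt6 {t n k : ℕ} (e : Fin n → Finset (Fin t)) (head : Fin n → Fin t)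
    (hhead : ∀ i, head i ∈ e i) (v : Fin t) (δ : Fin t → ℕ)
    (hδ : ∀ j, j ≠ v → δ j = (univ.filter fun i => head i = j).card)
    (hδv : δ v + k = (univ.filter fun i => head i = v).card)
    (hsum : (∑ j, δ j) + k = n)
    (hpaths : ∀ u, u ≠ v → ∃ paths : Fin k → List (Fin n),
      (∀ a, IsPath e head u v (paths a)) ∧
      (∀ a b, a ≠ b → ∀ i, i ∈ paths a → i ∉ paths b))
    (m : Fin t → ℕ) (hm : ∀ j, m j ≤ δ j) (hm0 : 0 < ∑ j, m j) :
    (((univ.filter fun i => ∀ j, 0 < m j → j ∉ e i).card : ℤ))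
      ≤ (n : ℤ) - k - ∑ j, (m j : ℤ) := by
  classical
  set S : Finset (Fin t) := univ.filter fun j => 0 < m j with hSdef
  set B : Finset (Fin n) := univ.filter (fun i => ∃ j, 0 < m j ∧ j ∈ e i) with hBdef
  set B1 : Finset (Fin n) := univ.filter (fun i => 0 < m (head i)) with hB1def
  have hB1B : B1 ⊆ B := by
    intro i hi
    simp only [hB1def, hBdef, mem_filter, mem_univ, true_and] at hi ⊢
    exact ⟨head i, hi, hhead i⟩
  -- B1.card = sum of indegrees over S
  have hB1card : B1.card = ∑ j ∈ S, (univ.filter fun i => head i = j).card := by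
    rw [card_eq_sum_card_fiberwise (f := head) (t := S)
      (fun i hi => by
        simp only [hB1def, mem_coe, mem_filter, mem_univ, true_and] at hi
        simp only [hSdef, mem_coe, mem_filter, mem_univ, true_and]; exact hi)]
    refine Finset.sum_congr rfl fun j hj => ?_
    congr 1
    ext i
    simp only [hB1def, hSdef, mem_filter, mem_univ, true_and] at hj ⊢
    constructor
    · rintro ⟨_, h⟩; exact h
    · rintro h; exact ⟨h ▸ hj, h⟩
  have hmS : ∑ j ∈ S, m j = ∑ j, m j := by
    rw [hSdef]
    exact Finset.sum_filter_of_ne (fun j _ hj => Nat.pos_of_ne_zero hj)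
  -- key inequality
  have key : (∑ j, m j) + k ≤ B.card := by
    by_cases hv : 0 < m v
    · -- v ∈ S
      have hvS : v ∈ S := by simp [hSdef, hv]
      have h1 : ∀ j ∈ S, m j + (if j = v then k else 0)
          ≤ (univ.filter fun i => head i = j).card := by
        intro j hj
        by_cases hjv : j = v
        · subst hjv
          simp only [if_pos rfl]
          rw [← hδv]
          exact Nat.add_le_add_right (hm j) k
        · simp only [if_neg hjv]
          rw [← hδ j hjv]
          simpa using hm j
      calc (∑ j, m j) + k = ∑ j ∈ S, (m j + if j = v then k else 0) := by
            rw [Finset.sum_add_distrib, hmS, Finset.sum_ite_eq' S v (fun _ => k), if_pos hvS]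
        _ ≤ ∑ j ∈ S, (univ.filter fun i => head i = j).card := Finset.sum_le_sum h1
        _ = B1.card := hB1card.symm
        _ ≤ B.card := card_le_card hB1B
    · -- v ∉ S
      obtain ⟨u, hu⟩ : ∃ u, 0 < m u := by
        by_contra h
        push_neg at h
        simp only [Nat.le_zero] at h
        simp [Finset.sum_eq_zero (fun j _ => h j)] at hm0
      have huv : u ≠ v := fun h => hv (h ▸ hu)
      obtain ⟨paths, hpath, hdisj⟩ := hpaths u huv
      have hcross := fun a => exists_crossing e head (fun j => 0 < m j) (paths a) u v
        (hpath a) hu hv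
      choose f hfmem hfwit hfhead using hcross
      have hfinj : Function.Injective f := by
        intro a b hab
        by_contra hne
        exact hdisj a b hne (f a) (hfmem a) (hab ▸ hfmem b)
      set B2 : Finset (Fin n) := Finset.image f univ with hB2def
      have hB2card : B2.card = k := by
        rw [hB2def, Finset.card_image_of_injective _ hfinj, card_univ, Fintype.card_fin]
      have hB2B : B2 ⊆ B := by
        intro i hi
        simp only [hB2def, mem_image, mem_univ, true_and] at hi
        obtain ⟨a, rfl⟩ := hi
        obtain ⟨w, hw, hwm⟩ := hfwit a
        simp only [hBdef, mem_filter, mem_univ, true_and]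
        exact ⟨w, hwm, hw⟩
      have hdisj12 : Disjoint B1 B2 := by
        rw [Finset.disjoint_left]
        intro i hi1 hi2
        simp only [hB1def, mem_filter, mem_univ, true_and] at hi1
        simp only [hB2def, mem_image, mem_univ, true_and] at hi2
        obtain ⟨a, rfl⟩ := hi2
        exact hfhead a hi1
      have hunion : B1 ∪ B2 ⊆ B := Finset.union_subset hB1B hB2B
      have hcard : B1.card + B2.card ≤ B.card := by
        rw [← Finset.card_union_of_disjoint hdisj12]
        exact card_le_card hunion
      have h1 : ∑ j, m j ≤ B1.card := by
        rw [hB1card, ← hmS]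
        refine Finset.sum_le_sum fun j hj => ?_
        have hjv : j ≠ v := by
          intro h; subst h
          simp only [hSdef, mem_filter, mem_univ, true_and] at hj
          exact hv hj
        rw [← hδ j hjv]
        exact hm j
      omega
  -- combine
  have hAB : (univ.filter fun i => ∀ j, 0 < m j → j ∉ e i).card + B.card = n := by
    have := Finset.card_filter_add_card_filter_not
      (s := (univ : Finset (Fin n))) (p := fun i => ∀ j, 0 < m j → j ∉ e i)
    rw [card_univ, Fintype.card_fin] at this
    have hBeq : B = univ.filter fun i => ¬ ∀ j, 0 < m j → j ∉ e i := by
      ext i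
      simp only [hBdef, mem_filter, mem_univ, true_and]
      push_neg
      tauto
    rw [hBeq]
    exact this
  have hsm : ∑ j, (m j : ℤ) = ((∑ j, m j : ℕ) : ℤ) := by push_cast; ring
  have hBn : B.card ≤ n := by omega
  rw [hsm]
  omega
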